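/- The function U(y) = −2 log(1 + a |y|^{2α+2}) satisfies ΔU(y) + |y|^{2α} V₀ e^{U(y)} = 0 for all y ∈ ℝ² \ {0}, where Δ is the Laplacian on ℝ². -/

import Mathlib

open MeasureTheory Metric Real Filter
open scoped RealInnerProductSpace Topology

noncomputable section

abbrev R2 : Type := EuclideanSpace ℝ (Fin 2)

def lap (u : R2 → ℝ) (x : R2) : ℝ :=
  ∑ j : Fin 2, fderiv ℝ (fun y => fderiv ℝ u y (EuclideanSpace.single j 1)) x
    (EuclideanSpace.single j 1)

def aconst (α V0 : ℝ) : ℝ := V0 / (8 * (1 + α) ^ 2)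

def g1 (α a s : ℝ) : ℝ := (-2 * a * (α + 1) * s ^ α) / (1 + a * s ^ (α + 1))

def g2 (α a s : ℝ) : ℝ :=
  ((-2 * a * (α + 1) * (α * s ^ (α - 1))) * (1 + a * s ^ (α + 1))
    - (-2 * a * (α + 1) * s ^ α) * (a * ((α + 1) * s ^ α))) / (1 + a * s ^ (α + 1)) ^ 2

lemma denom_pos {α a s : ℝ} (ha : 0 < a) (hs : 0 < s) : 0 < 1 + a * s ^ (α + 1) := by
  have := Real.rpow_pos_of_pos hs (α + 1)
  positivity

lemma hasDerivAt_f {α a : ℝ} (ha : 0 < a) {s : ℝ} (hs : 0 < s) :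
    HasDerivAt (fun t => -2 * Real.log (1 + a * t ^ (α + 1))) (g1 α a s) s := by
  have hpow : HasDerivAt (fun t : ℝ => t ^ (α + 1)) ((α + 1) * s ^ (α + 1 - 1)) s :=
    Real.hasDerivAt_rpow_const (Or.inl hs.ne')
  have hD : HasDerivAt (fun t : ℝ => 1 + a * t ^ (α + 1)) (a * ((α + 1) * s ^ (α + 1 - 1))) s :=
    (hpow.const_mul a).const_add 1
  have hlog := (Real.hasDerivAt_log (denom_pos ha hs).ne').comp s hD
  have := hlog.const_mul (-2)
  refine this.congr_deriv ?_
  rw [g1, show α + 1 - 1 = α by ring, div_eq_mul_inv]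
  ring

lemma hasDerivAt_g1 {α a : ℝ} (ha : 0 < a) {s : ℝ} (hs : 0 < s) :
    HasDerivAt (g1 α a) (g2 α a s) s := by
  have hnum : HasDerivAt (fun t : ℝ => -2 * a * (α + 1) * t ^ α)
      (-2 * a * (α + 1) * (α * s ^ (α - 1))) s :=
    (Real.hasDerivAt_rpow_const (p := α) (Or.inl hs.ne')).const_mul _
  have hden : HasDerivAt (fun t : ℝ => 1 + a * t ^ (α + 1)) (a * ((α + 1) * s ^ α)) s := by
    have hpow : HasDerivAt (fun t : ℝ => t ^ (α + 1)) ((α + 1) * s ^ (α + 1 - 1)) s :=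
      Real.hasDerivAt_rpow_const (Or.inl hs.ne')
    have := (hpow.const_mul a).const_add 1
    refine this.congr_deriv ?_
    rw [show α + 1 - 1 = α by ring]
  exact hnum.div hden (denom_pos ha hs).ne'

lemma radial_identity {α a : ℝ} (ha : 0 < a) {s : ℝ} (hs : 0 < s) :
    4 * s * g2 α a s + 4 * g1 α a s
      = -(8 * a * (α + 1) ^ 2) * s ^ α / (1 + a * s ^ (α + 1)) ^ 2 := by
  have h1 : s ^ (α + 1) = s ^ α * s := by
    rw [Real.rpow_add hs, Real.rpow_one]
  have h2 : s ^ (α - 1) = s ^ α / s := by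
    rw [Real.rpow_sub hs, Real.rpow_one]
  have hD : (0:ℝ) < 1 + a * s ^ (α + 1) := denom_pos ha hs
  rw [g1, g2, h1, h2]
  have hD' : 1 + a * (s ^ α * s) ≠ 0 := by rw [h1] at hD; exact hD.ne'
  field_simp
  ring

lemma norm_rpow_eq (w : R2) (c : ℝ) : ‖w‖ ^ (2 * c) = (‖w‖ ^ 2 : ℝ) ^ c := by
  rw [← Real.rpow_natCast ‖w‖ 2, ← Real.rpow_mul (norm_nonneg w)]
  norm_num

lemma hasFDerivAt_normsq (w : R2) :
    HasFDerivAt (fun v : R2 => ‖v‖ ^ 2) ((2:ℝ) • innerSL ℝ w) w := by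
  have h := (hasFDerivAt_id w).norm_sq
  refine h.congr_fderiv ?_
  ext v
  simp [two_smul]

/-- Equation (2.4): the standard bubble `U(y) = -2 log(1 + a|y|^{2α+2})` solves
`ΔU + |y|^{2α} V₀ e^U = 0` away from the origin. -/
theorem bubble_solves_liouville (α V0 : ℝ) (hα : 0 < α) (hV0 : 0 < V0) :
    ∀ y : R2, y ≠ 0 →
      lap (fun w => -2 * Real.log (1 + aconst α V0 * ‖w‖ ^ (2 * α + 2))) y
        + ‖y‖ ^ (2 * α) * V0 *
            Real.exp (-2 * Real.log (1 + aconst α V0 * ‖y‖ ^ (2 * α + 2))) = 0 := by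
  intro y hy
  set a : ℝ := aconst α V0 with ha_def
  have ha : 0 < a := by
    rw [ha_def, aconst]
    have : (0:ℝ) < 8 * (1 + α) ^ 2 := by positivity
    positivity
  -- rewrite the function in terms of the squared norm
  have hfun : (fun w : R2 => -2 * Real.log (1 + a * ‖w‖ ^ (2 * α + 2)))
      = (fun w : R2 => -2 * Real.log (1 + a * (‖w‖ ^ 2 : ℝ) ^ (α + 1))) := by
    funext w
    rw [show (2 * α + 2 : ℝ) = 2 * (α + 1) by ring, norm_rpow_eq]
  set u : R2 → ℝ := fun w : R2 => -2 * Real.log (1 + a * (‖w‖ ^ 2 : ℝ) ^ (α + 1)) with hu_def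
  set s : ℝ := ‖y‖ ^ 2 with hs_def
  have hs : 0 < s := by
    have : 0 < ‖y‖ := norm_pos_iff.mpr hy
    positivity
  -- first derivative identity, valid near any nonzero point
  have hfd : ∀ w : R2, w ≠ 0 → ∀ j : Fin 2,
      fderiv ℝ u w (EuclideanSpace.single j 1)
        = g1 α a (‖w‖ ^ 2) * (2 * w j) := by
    intro w hw j
    have hsw : 0 < ‖w‖ ^ 2 := by
      have : 0 < ‖w‖ := norm_pos_iff.mpr hw
      positivity
    have hcomp : HasFDerivAt u (g1 α a (‖w‖ ^ 2) • ((2:ℝ) • innerSL ℝ w)) w :=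
      (hasDerivAt_f (α := α) ha hsw).comp_hasFDerivAt (f := fun v : R2 => ‖v‖ ^ 2) w (hasFDerivAt_normsq w)
    rw [hcomp.fderiv]
    have hin : ⟪w, EuclideanSpace.single j (1:ℝ)⟫ = w j := by
      rw [EuclideanSpace.inner_single_right]; simp
    simp only [ContinuousLinearMap.smul_apply, innerSL_apply_apply, smul_eq_mul, hin]
  have hev : ∀ j : Fin 2,
      (fun w : R2 => fderiv ℝ u w (EuclideanSpace.single j 1))
        =ᶠ[𝓝 y] (fun w : R2 => g1 α a (‖w‖ ^ 2) * (2 * w j)) := by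
    intro j
    filter_upwards [eventually_ne_nhds hy] with w hw
    exact hfd w hw j
  -- second derivative
  have hsecond : ∀ j : Fin 2,
      fderiv ℝ (fun w : R2 => fderiv ℝ u w (EuclideanSpace.single j 1)) y
          (EuclideanSpace.single j 1)
        = g1 α a s * 2 + 2 * y j * (g2 α a s * (2 * y j)) := by
    intro j
    rw [(hev j).fderiv_eq]
    have h1 : HasFDerivAt (fun w : R2 => g1 α a (‖w‖ ^ 2))
        (g2 α a s • ((2:ℝ) • innerSL ℝ y)) y :=
      HasDerivAt.comp_hasFDerivAt_of_eq y (hasDerivAt_g1 ha hs) (hasFDerivAt_normsq y) hs_def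
    have h2 : HasFDerivAt (fun w : R2 => 2 * w j)
        ((2:ℝ) • (EuclideanSpace.proj j : R2 →L[ℝ] ℝ)) y :=
      ((EuclideanSpace.proj j : R2 →L[ℝ] ℝ).hasFDerivAt).const_mul 2
    rw [show (fun w : R2 => g1 α a (‖w‖ ^ 2) * (2 * w j)) = (fun w : R2 => g1 α a (‖w‖ ^ 2)) * (fun w : R2 => 2 * w j) from rfl, (h1.mul h2).fderiv]
    have hin : ⟪y, EuclideanSpace.single j (1:ℝ)⟫ = y j := by
      rw [EuclideanSpace.inner_single_right]; simp
    have hproj : (EuclideanSpace.proj j : R2 →L[ℝ] ℝ) (EuclideanSpace.single j 1) = 1 := by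
      simp [EuclideanSpace.single_apply]
    simp only [ContinuousLinearMap.add_apply, ContinuousLinearMap.smul_apply, innerSL_apply_apply,
      smul_eq_mul, hin, hproj, ← hs_def]
    ring
  have hsum : (∑ j : Fin 2, (y j) ^ 2) = s := by
    rw [hs_def, EuclideanSpace.norm_eq, Real.sq_sqrt (by positivity)]
    simp [sq_abs]
  have hlap : lap u y = 4 * s * g2 α a s + 4 * g1 α a s := by
    rw [lap]
    rw [Finset.sum_congr rfl (fun j _ => hsecond j)]
    rw [Finset.sum_add_distrib, Finset.sum_const]
    simp only [Finset.card_univ, Fintype.card_fin, nsmul_eq_mul]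
    have : (∑ j : Fin 2, 2 * y j * (g2 α a s * (2 * y j)))
        = 4 * g2 α a s * (∑ j : Fin 2, (y j) ^ 2) := by
      rw [Finset.mul_sum]; congr 1; funext j; ring
    rw [this, hsum]; ring
  -- put it together
  have hDpos : (0:ℝ) < 1 + a * s ^ (α + 1) := denom_pos ha hs
  have hexp : Real.exp (-2 * Real.log (1 + a * s ^ (α + 1)))
      = ((1 + a * s ^ (α + 1)) ^ 2)⁻¹ := by
    rw [show (-2:ℝ) * Real.log (1 + a * s ^ (α + 1))
        = Real.log (((1 + a * s ^ (α + 1)) ^ 2)⁻¹) by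
      rw [Real.log_inv, Real.log_pow]; push_cast; ring]
    exact Real.exp_log (by positivity)
  have hnorm2α : ‖y‖ ^ (2 * α) = s ^ α := by rw [norm_rpow_eq, ← hs_def]
  have hnorm2α2 : ‖y‖ ^ (2 * α + 2) = s ^ (α + 1) := by
    rw [show (2 * α + 2 : ℝ) = 2 * (α + 1) by ring, norm_rpow_eq, ← hs_def]
  rw [hfun, hnorm2α, hnorm2α2, hlap, radial_identity ha hs, hexp]
  have h8a : 8 * a * (α + 1) ^ 2 = V0 := by
    rw [ha_def, aconst]
    have h : (8 * (1 + α) ^ 2 : ℝ) ≠ 0 := by positivity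
    field_simp
    ring
  rw [h8a]
  field_simp
  ring
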